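/- The Robinson form R(x,y,z) = x⁶+y⁶+z⁶ − (x⁴y² + y⁴z² + z⁴x² + x²y⁴ + y²z⁴ + z²x⁴) + 3x²y²z² is not a sum of squares of real cubic forms. -/

import Mathlib

open MvPolynomial

lemma key_eval18 (h : MvPolynomial (Fin 3) ℝ) (hh : h.IsHomogeneous 3) :
    4 * eval ![1,0,0] h
      = - eval ![1,1,1] h - eval ![1,1,-1] h - eval ![1,-1,1] h + eval ![-1,1,1] h
        + 2 * eval ![1,1,0] h + 2 * eval ![1,-1,0] h + 2 * eval ![1,0,1] h
        + 2 * eval ![1,0,-1] h := by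
  have e : ∀ v : Fin 3 → ℝ, eval v h
      = ∑ d ∈ h.support, coeff d h * (v 0 ^ d 0 * v 1 ^ d 1 * v 2 ^ d 2) := by
    intro v
    rw [eval_eq']
    exact Finset.sum_congr rfl fun d _ => by rw [Fin.prod_univ_three]
  simp only [e, Finset.mul_sum, ← Finset.sum_neg_distrib, ← Finset.sum_add_distrib,
    ← Finset.sum_sub_distrib]
  refine Finset.sum_congr rfl fun d hd => ?_
  have h1 := hh (mem_support_iff.mp hd)
  rw [Finsupp.weight_apply, Finsupp.sum_fintype] at h1
  · replace h1 : d 0 + d 1 + d 2 = 3 := by simpa [Fin.sum_univ_three] using h1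
    simp only [Matrix.cons_val_zero, Matrix.cons_val_one, Matrix.head_cons,
      Matrix.cons_val_two, Matrix.tail_cons]
    obtain ⟨a, b, c, ha, hb, hc⟩ : ∃ a b c, d 0 = a ∧ d 1 = b ∧ d 2 = c :=
      ⟨_, _, _, rfl, rfl, rfl⟩
    rw [ha, hb, hc] at h1 ⊢
    have hA : a ≤ 3 := by omega
    have hB : b ≤ 3 := by omega
    have hC : c ≤ 3 := by omega
    interval_cases a <;> interval_cases b <;> interval_cases c <;>
      first | (exfalso; omega) | ring
  · simp

lemma sum_sq_eq_zero18 {k : ℕ} (f : Fin k → ℝ) (hs : ∑ t, f t ^ 2 = 0) (t : Fin k) :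
    f t = 0 := by
  have := (Finset.sum_eq_zero_iff_of_nonneg (fun i _ => sq_nonneg (f i))).mp hs t
    (Finset.mem_univ t)
  exact pow_eq_zero_iff (by norm_num) |>.mp this

/-- The Robinson form is not a sum of squares of real cubic forms. -/
theorem stmt18 :
    ¬ ∃ (k : ℕ) (h : Fin k → MvPolynomial (Fin 3) ℝ),
      (∀ t, (h t).IsHomogeneous 3) ∧
      (X 0 ^ 6 + X 1 ^ 6 + X 2 ^ 6
          - (X 0 ^ 4 * X 1 ^ 2 + X 1 ^ 4 * X 2 ^ 2 + X 2 ^ 4 * X 0 ^ 2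
             + X 0 ^ 2 * X 1 ^ 4 + X 1 ^ 2 * X 2 ^ 4 + X 2 ^ 2 * X 0 ^ 4)
          + (C (3 : ℝ)) * X 0 ^ 2 * X 1 ^ 2 * X 2 ^ 2 : MvPolynomial (Fin 3) ℝ) =
        ∑ t, (h t) ^ 2 := by
  rintro ⟨k, h, hhom, heq⟩
  have hz : ∀ v : Fin 3 → ℝ,
      (eval v (X 0 ^ 6 + X 1 ^ 6 + X 2 ^ 6
          - (X 0 ^ 4 * X 1 ^ 2 + X 1 ^ 4 * X 2 ^ 2 + X 2 ^ 4 * X 0 ^ 2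
             + X 0 ^ 2 * X 1 ^ 4 + X 1 ^ 2 * X 2 ^ 4 + X 2 ^ 2 * X 0 ^ 4)
          + (C (3 : ℝ)) * X 0 ^ 2 * X 1 ^ 2 * X 2 ^ 2 : MvPolynomial (Fin 3) ℝ))
        = ∑ t, (eval v (h t)) ^ 2 := by
    intro v
    rw [heq]
    simp
  have hzero : ∀ (v : Fin 3 → ℝ),
      (v 0 ^ 6 + v 1 ^ 6 + v 2 ^ 6
          - (v 0 ^ 4 * v 1 ^ 2 + v 1 ^ 4 * v 2 ^ 2 + v 2 ^ 4 * v 0 ^ 2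
             + v 0 ^ 2 * v 1 ^ 4 + v 1 ^ 2 * v 2 ^ 4 + v 2 ^ 2 * v 0 ^ 4)
          + 3 * v 0 ^ 2 * v 1 ^ 2 * v 2 ^ 2) = 0 →
      ∀ t, eval v (h t) = 0 := by
    intro v hv t
    refine sum_sq_eq_zero18 (fun t => eval v (h t)) ?_ t
    rw [← hz v]
    simpa using hv
  have e1 := hzero ![1,1,1] (by norm_num [Matrix.cons_val_two, Matrix.tail_cons, Matrix.head_cons])
  have e2 := hzero ![1,1,-1] (by norm_num [Matrix.cons_val_two, Matrix.tail_cons, Matrix.head_cons])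
  have e3 := hzero ![1,-1,1] (by norm_num [Matrix.cons_val_two, Matrix.tail_cons, Matrix.head_cons])
  have e4 := hzero ![-1,1,1] (by norm_num [Matrix.cons_val_two, Matrix.tail_cons, Matrix.head_cons])
  have e5 := hzero ![1,1,0] (by norm_num [Matrix.cons_val_two, Matrix.tail_cons, Matrix.head_cons])
  have e6 := hzero ![1,-1,0] (by norm_num [Matrix.cons_val_two, Matrix.tail_cons, Matrix.head_cons])
  have e7 := hzero ![1,0,1] (by norm_num [Matrix.cons_val_two, Matrix.tail_cons, Matrix.head_cons])
  have e8 := hzero ![1,0,-1] (by norm_num [Matrix.cons_val_two, Matrix.tail_cons, Matrix.head_cons])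
  have e0 : ∀ t, eval ![1,0,0] (h t) = 0 := by
    intro t
    have := key_eval18 (h t) (hhom t)
    rw [e1 t, e2 t, e3 t, e4 t, e5 t, e6 t, e7 t, e8 t] at this
    linarith
  have := hz ![1,0,0]
  simp only [e0] at this
  norm_num [Matrix.cons_val_two, Matrix.tail_cons, Matrix.head_cons] at this
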